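/- Let A be a unital Banach algebra, A₀, B ∈ A, and L(x,t) = exp(A₀ x + A₀³ t) B. On the set where I + L is invertible, Q̃ := (I + L)⁻¹ A₀ (I - L) satisfies Q̃_x = -(I + L)⁻¹ A₀ (I + L)⁻¹ (A₀ L + L A₀). -/

import Mathlib

variable {A : Type*} [NormedRing A] [NormedAlgebra ℝ A] [CompleteSpace A]

/-- partial derivative in the first (space) variable -/
noncomputable def px (Q : ℝ × ℝ → A) : ℝ × ℝ → A := fun p => deriv (fun x => Q (x, p.2)) p.1

/-- partial derivative in the second (time) variable -/
noncomputable def pt (Q : ℝ × ℝ → A) : ℝ × ℝ → A := fun p => deriv (fun t => Q (p.1, t)) p.2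

theorem stmt_12 (A₀ B : A)
    (L : ℝ × ℝ → A) (hL : L = fun p : ℝ × ℝ => NormedSpace.exp (p.1 • A₀ + p.2 • A₀ ^ 3) * B)
    (Qt : ℝ × ℝ → A) (hQt : Qt = fun p => Ring.inverse (1 + L p) * A₀ * (1 - L p)) :
    ∀ p : ℝ × ℝ, IsUnit (1 + L p) →
      px Qt p = -(Ring.inverse (1 + L p) * A₀ * Ring.inverse (1 + L p) * (A₀ * L p + L p * A₀)) := by
  rintro ⟨x₀, t₀⟩ h
  set g : ℝ → A := fun x => L (x, t₀) with hg
  -- derivative of g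
  have hcomm : ∀ x : ℝ, Commute (x • A₀) (t₀ • A₀ ^ 3) :=
    fun x => (((Commute.refl A₀).pow_right 3).smul_left x).smul_right t₀
  have hgx : ∀ x : ℝ, g x = NormedSpace.exp (x • A₀) * (NormedSpace.exp (t₀ • A₀ ^ 3) * B) := by
    intro x
    let +nondep : NormedAlgebra ℚ A := .restrictScalars ℚ ℝ A
    simp only [hg, hL, NormedSpace.exp_add_of_commute (hcomm x), mul_assoc]
  have hgderiv : HasDerivAt g (A₀ * g x₀) x₀ := by
    have h1 : HasDerivAt (fun x : ℝ => NormedSpace.exp (x • A₀))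
        (A₀ * NormedSpace.exp (x₀ • A₀)) x₀ := hasDerivAt_exp_smul_const' A₀ x₀
    have h2 := h1.mul_const (NormedSpace.exp (t₀ • A₀ ^ 3) * B)
    have : (fun x : ℝ => NormedSpace.exp (x • A₀) * (NormedSpace.exp (t₀ • A₀ ^ 3) * B)) = g :=
      funext fun x => (hgx x).symm
    rw [this] at h2
    convert h2 using 1
    rw [hgx x₀]; noncomm_ring
  set Lp := L (x₀, t₀) with hLp
  set v : A := ↑h.unit⁻¹ with hv
  have hu : (h.unit : A) = 1 + Lp := h.unit_spec
  have hvu : v * (1 + Lp) = 1 := by rw [← hu]; exact h.unit.inv_mul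
  have huv : (1 + Lp) * v = 1 := by rw [← hu]; exact h.unit.mul_inv
  -- derivative of x ↦ Ring.inverse (1 + g x)
  have h1g : HasDerivAt (fun x => 1 + g x) (A₀ * g x₀) x₀ := by exact hgderiv.const_add 1
  have hinv : HasDerivAt (fun x => Ring.inverse (1 + g x)) (-(v * (A₀ * Lp) * v)) x₀ := by
    have hF := hasFDerivAt_ringInverse (𝕜 := ℝ) h.unit
    rw [hu] at hF
    have := hF.comp_hasDerivAt x₀ h1g
    exact this
  have hsub : HasDerivAt (fun x => 1 - g x) (-(A₀ * Lp)) x₀ := by exact hgderiv.const_sub 1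
  have hQ : HasDerivAt (fun x => Ring.inverse (1 + g x) * A₀ * (1 - g x))
      ((-(v * (A₀ * Lp) * v) * A₀) * (1 - Lp) + (Ring.inverse (1 + Lp) * A₀) * (-(A₀ * Lp))) x₀ := by
    exact (hinv.mul_const A₀).mul hsub
  have hRinv : Ring.inverse (1 + Lp) = v := by
    rw [← hu, Ring.inverse_unit]
  have hpx : px Qt (x₀, t₀) = (-(v * (A₀ * Lp) * v) * A₀) * (1 - Lp)
      + (Ring.inverse (1 + Lp) * A₀) * (-(A₀ * Lp)) := by
    have : (fun x => Qt (x, t₀)) = fun x => Ring.inverse (1 + g x) * A₀ * (1 - g x) := by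
      funext x; rw [hQt]
    rw [px, this]
    exact hQ.deriv
  rw [hpx, hRinv]
  -- algebra
  have hc : Lp * v = v * Lp := by
    have e1 : Lp * v = 1 - v := by
      have : (1 + Lp) * v = v + Lp * v := by noncomm_ring
      rw [this] at huv; linear_combination (norm := noncomm_ring) huv
    have e2 : v * Lp = 1 - v := by
      have : v * (1 + Lp) = v + v * Lp := by noncomm_ring
      rw [this] at hvu; linear_combination (norm := noncomm_ring) hvu
    rw [e1, e2]
  calc -(v * (A₀ * Lp) * v) * A₀ * (1 - Lp) + v * A₀ * -(A₀ * Lp)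
      = -(v * A₀ * (Lp * v) * (A₀ * (1 - Lp))) - v * A₀ * ((v * (1 + Lp)) * (A₀ * Lp)) := by
        rw [hvu]; noncomm_ring
    _ = -(v * A₀ * v * (Lp * (A₀ * (1 - Lp)) + (1 + Lp) * (A₀ * Lp))) := by
        rw [hc]; noncomm_ring
    _ = -(v * A₀ * v * (A₀ * Lp + Lp * A₀)) := by noncomm_ring
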